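/- Let β > 0, p a positive integer, and d a positive integer. The probability Ψ_β(p,d) that the β-biased monotonic random walk starting at the origin meets a lattice point on the line y = px + d equals Φ_β(p,0)^d, where Φ_β(p,0) is the probability of crossing y = px. -/

import Mathlib

/-- A monotonic lattice path with `L` steps is encoded as `f : Fin L → Bool`,
where `true` is an up-step `(0,1)` and `false` is a right-step `(1,0)`.
`upsIn f k` is the number of up-steps among the first `k` steps. -/
def upsIn {L : ℕ} (f : Fin L → Bool) (k : ℕ) : ℕ :=
  (Finset.univ.filter (fun i : Fin L => (i : ℕ) < k ∧ f i = true)).card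

/-- The number of right-steps among the first `k` steps. -/
def rightsIn {L : ℕ} (f : Fin L → Bool) (k : ℕ) : ℕ :=
  (Finset.univ.filter (fun i : Fin L => (i : ℕ) < k ∧ f i = false)).card

/-- `weakCount p d n` is the number of monotonic lattice paths from `(0,0)` to
`(n, p*n + d)` all of whose lattice points lie weakly below the line `y = p*x + d`. -/
noncomputable def weakCount (p d n : ℕ) : ℕ :=
  Nat.card {f : Fin ((p + 1) * n + d) → Bool //
    upsIn f ((p + 1) * n + d) = p * n + d ∧
    ∀ k ≤ (p + 1) * n + d, upsIn f k ≤ p * rightsIn f k + d}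

/-- `strictCount p d n` is the number of monotonic lattice paths from `(0,0)` to
`(n, p*n + d)` all of whose lattice points, except the endpoints, lie strictly below
the line `y = p*x + d` (with the convention `strictCount p 0 0 = 0`). -/
noncomputable def strictCount (p d n : ℕ) : ℕ :=
  if n = 0 ∧ d = 0 then 0 else
  Nat.card {f : Fin ((p + 1) * n + d) → Bool //
    upsIn f ((p + 1) * n + d) = p * n + d ∧
    ∀ k, 0 < k → k < (p + 1) * n + d → upsIn f k < p * rightsIn f k + d}

/-- `crossProb β p d` is the probability `Φ_β(p,d)` that the `β`-biased monotonic random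
walk starting at the origin (moving right with probability `1/(β+1)` and up with
probability `β/(β+1)`) crosses the line `y = p*x + d`, i.e. meets a lattice point
`(n, p*n + d + 1)`.  Decomposing by the first lattice point above the line, this
probability equals `∑ₙ S(n,d) β^{pn+d+1}/(β+1)^{pn+n+d+1}`, where `S(n,d) = weakCount p d n`. -/
noncomputable def crossProb (β : ℝ) (p d : ℕ) : ℝ :=
  ∑' n : ℕ, (weakCount p d n : ℝ) * β ^ (p * n + d + 1) / (β + 1) ^ ((p + 1) * n + d + 1)

/-- `meetProb β p d` is the probability `Ψ_β(p,d)` that the `β`-biased monotonic random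
walk starting at the origin meets a lattice point on the line `y = p*x + d` after
departure.  For `d > 0`, decomposing by the first such lattice point `(n, p*n+d)` (reached
by a path strictly below the line except at its endpoint), this probability equals
`∑ₙ T(n,d) β^{pn+d}/(β+1)^{pn+n+d}`; for `d = 0`, by the reflection symmetry of first
meeting points it equals `2 ∑ₙ N(p,n) β^{pn}/(β+1)^{pn+n}`. -/
noncomputable def meetProb (β : ℝ) (p d : ℕ) : ℝ :=
  if d = 0 then 2 * ∑' n : ℕ, (strictCount p 0 n : ℝ) * β ^ (p * n) / (β + 1) ^ ((p + 1) * n)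
  else ∑' n : ℕ, (strictCount p d n : ℝ) * β ^ (p * n + d) / (β + 1) ^ ((p + 1) * n + d)

namespace MRW

def cnt (w : ℕ → Bool) (k : ℕ) : ℕ := ((Finset.range k).filter (fun i => w i = true)).card

lemma cnt_zero (w : ℕ → Bool) : cnt w 0 = 0 := by simp [cnt]

lemma cnt_succ (w : ℕ → Bool) (k : ℕ) :
    cnt w (k+1) = cnt w k + (if w k then 1 else 0) := by
  unfold cnt
  rw [Finset.range_add_one, Finset.filter_insert]
  by_cases h : w k = true
  · rw [if_pos h, Finset.card_insert_of_notMem (by simp), if_pos h]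
  · rw [if_neg h, if_neg h, Nat.add_zero]

lemma cnt_le (w : ℕ → Bool) (k : ℕ) : cnt w k ≤ k := by
  calc cnt w k ≤ (Finset.range k).card := Finset.card_filter_le _ _
  _ = k := Finset.card_range k

lemma cnt_add (w : ℕ → Bool) (a b : ℕ) :
    cnt w (a + b) = cnt w a + cnt (fun j => w (a + j)) b := by
  induction b with
  | zero => simp [cnt_zero]
  | succ b ih => rw [← Nat.add_assoc, cnt_succ, ih, cnt_succ, Nat.add_assoc]

lemma cnt_congr {w w' : ℕ → Bool} (k : ℕ) (h : ∀ i < k, w i = w' i) :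
    cnt w k = cnt w' k := by
  unfold cnt
  congr 1
  apply Finset.filter_congr
  intro i hi
  rw [h i (Finset.mem_range.mp hi)]

lemma cnt_mono (w : ℕ → Bool) : Monotone (cnt w) := by
  apply monotone_nat_of_le_succ
  intro k; rw [cnt_succ]; omega

lemma sub_cnt_mono (w : ℕ → Bool) : Monotone (fun k => k - cnt w k) := by
  apply monotone_nat_of_le_succ
  intro k
  have h1 := cnt_succ w k
  have h2 := cnt_le w k
  split_ifs at h1 <;> omega

def ext {L : ℕ} (f : Fin L → Bool) : ℕ → Bool :=
  fun i => if h : i < L then f ⟨i, h⟩ else false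

lemma ext_lt {L : ℕ} (f : Fin L → Bool) {i : ℕ} (h : i < L) : ext f i = f ⟨i, h⟩ :=
  dif_pos h

lemma upsIn_eq_cnt {L : ℕ} (f : Fin L → Bool) {k : ℕ} (hk : k ≤ L) :
    upsIn f k = cnt (ext f) k := by
  unfold upsIn cnt
  refine Finset.card_bij (fun i _ => (i : ℕ)) ?_ ?_ ?_
  · intro i hi
    simp only [Finset.mem_filter, Finset.mem_univ, true_and] at hi
    simp only [Finset.mem_filter, Finset.mem_range]
    exact ⟨hi.1, by rw [ext_lt f i.isLt]; exact hi.2⟩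
  · intro i hi j hj hij
    exact Fin.ext hij
  · intro j hj
    simp only [Finset.mem_filter, Finset.mem_range] at hj
    refine ⟨⟨j, lt_of_lt_of_le hj.1 hk⟩, ?_, rfl⟩
    simp only [Finset.mem_filter, Finset.mem_univ, true_and]
    exact ⟨hj.1, by rw [← ext_lt f (lt_of_lt_of_le hj.1 hk)]; exact hj.2⟩

lemma cnt_false (w : ℕ → Bool) (k : ℕ) :
    ((Finset.range k).filter (fun i => w i = false)).card = k - cnt w k := by
  have h := Finset.card_filter_add_card_filter_not
    (s := Finset.range k) (p := fun i => w i = true)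
  rw [Finset.card_range] at h
  have h2 : (Finset.filter (fun i => ¬ w i = true) (Finset.range k)).card
      = (Finset.filter (fun i => w i = false) (Finset.range k)).card := by
    congr 1
    apply Finset.filter_congr
    intro i _
    simp
  unfold cnt
  omega

lemma rightsIn_eq_card {L : ℕ} (f : Fin L → Bool) {k : ℕ} (hk : k ≤ L) :
    rightsIn f k = ((Finset.range k).filter (fun i => ext f i = false)).card := by
  unfold rightsIn
  refine Finset.card_bij (fun i _ => (i : ℕ)) ?_ ?_ ?_
  · intro i hi
    simp only [Finset.mem_filter, Finset.mem_univ, true_and] at hi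
    simp only [Finset.mem_filter, Finset.mem_range]
    exact ⟨hi.1, by rw [ext_lt f i.isLt]; exact hi.2⟩
  · intro i hi j hj hij
    exact Fin.ext hij
  · intro j hj
    simp only [Finset.mem_filter, Finset.mem_range] at hj
    refine ⟨⟨j, lt_of_lt_of_le hj.1 hk⟩, ?_, rfl⟩
    simp only [Finset.mem_filter, Finset.mem_univ, true_and]
    exact ⟨hj.1, by rw [← ext_lt f (lt_of_lt_of_le hj.1 hk)]; exact hj.2⟩

lemma rightsIn_eq {L : ℕ} (f : Fin L → Bool) {k : ℕ} (hk : k ≤ L) :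
    rightsIn f k = k - cnt (ext f) k := by
  rw [rightsIn_eq_card f hk, cnt_false]

end MRW

namespace MRW2
open MRW

variable {p : ℕ}

/-- Height above the line `y = p x` after `k` steps of word `w`. -/
def vv (p : ℕ) (w : ℕ → Bool) (k : ℕ) : ℤ :=
  (cnt w k : ℤ) - p * ((k : ℤ) - (cnt w k : ℤ))

lemma vv_zero (w : ℕ → Bool) : vv p w 0 = 0 := by simp [vv, cnt_zero]

lemma vv_succ (w : ℕ → Bool) (k : ℕ) :
    vv p w (k+1) = vv p w k + (if w k then 1 else -(p:ℤ)) := by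
  unfold vv
  rw [cnt_succ]
  split_ifs <;> push_cast <;> ring

lemma vv_shift (w : ℕ → Bool) (a k : ℕ) :
    vv p w (a + k) = vv p w a + vv p (fun j => w (a + j)) k := by
  unfold vv
  rw [cnt_add]
  push_cast
  ring

/-- condition translations -/
lemma lt_iff_vv {w : ℕ → Bool} {k D : ℕ} :
    cnt w k < p * (k - cnt w k) + D ↔ vv p w k < D := by
  have h := cnt_le w k
  unfold vv
  rw [← Nat.cast_sub h]
  constructor <;> intro hh
  · have : (cnt w k : ℤ) < p * ((k - cnt w k : ℕ) : ℤ) + D := by exact_mod_cast hh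
    omega
  · have : (cnt w k : ℤ) < p * ((k - cnt w k : ℕ) : ℤ) + D := by omega
    exact_mod_cast this

lemma eq_iff_vv {w : ℕ → Bool} {k D : ℕ} :
    cnt w k = p * (k - cnt w k) + D ↔ vv p w k = D := by
  have h := cnt_le w k
  unfold vv
  rw [← Nat.cast_sub h]
  constructor <;> intro hh
  · have : (cnt w k : ℤ) = p * ((k - cnt w k : ℕ) : ℤ) + D := by exact_mod_cast hh
    omega
  · have : (cnt w k : ℤ) = p * ((k - cnt w k : ℕ) : ℤ) + D := by omega
    exact_mod_cast this

/-- First crossing lemma. -/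
lemma exists_first_crossing {w : ℕ → Bool} {K : ℕ} (hK : 1 ≤ vv p w K) :
    ∃ k0, 0 < k0 ∧ k0 ≤ K ∧ vv p w k0 = 1 ∧ ∀ j < k0, vv p w j ≤ 0 := by
  classical
  have hex : ∃ k, 1 ≤ vv p w k := ⟨K, hK⟩
  set k0 := Nat.find hex with hk0
  clear_value k0
  have hspec : 1 ≤ vv p w k0 := hk0 ▸ Nat.find_spec hex
  have hmin : ∀ j < k0, vv p w j ≤ 0 := by
    intro j hj
    have := Nat.find_min hex (hk0 ▸ hj)
    omega
  have hk0pos : 0 < k0 := by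
    rcases Nat.eq_zero_or_pos k0 with h | h
    · rw [h] at hspec; rw [vv_zero] at hspec; omega
    · exact h
  have hk0K : k0 ≤ K := hk0 ▸ Nat.find_min' hex hK
  refine ⟨k0, hk0pos, hk0K, ?_, hmin⟩
  obtain ⟨k1, rfl⟩ : ∃ k1, k0 = k1 + 1 := ⟨k0 - 1, by omega⟩
  have hstep := vv_succ (p := p) w k1
  have hprev : vv p w k1 ≤ 0 := hmin k1 (by omega)
  split_ifs at hstep <;> omega

end MRW2

namespace MRW3
open MRW

/-- Restriction to the first `a` steps. -/
def takeF (a : ℕ) {L : ℕ} (ha : a ≤ L) (f : Fin L → Bool) : Fin a → Bool :=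
  fun i => f ⟨i, lt_of_lt_of_le i.isLt ha⟩

/-- The `b` steps starting after step `a`. -/
def dropF (a b : ℕ) {L : ℕ} (hab : a + b ≤ L) (f : Fin L → Bool) : Fin b → Bool :=
  fun j => f ⟨a + (j : ℕ), by have := j.isLt; omega⟩

/-- Glue a prefix of length `a` and a suffix of length `b` into a word of length `L = a + b`. -/
def glueF (a b L : ℕ) (hab : a + b = L) (f1 : Fin a → Bool) (f2 : Fin b → Bool) :
    Fin L → Bool :=
  fun i => if h : (i : ℕ) < a then f1 ⟨i, h⟩ else f2 ⟨(i : ℕ) - a, by have := i.isLt; omega⟩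

lemma ext_takeF {a L : ℕ} (ha : a ≤ L) (f : Fin L → Bool) {i : ℕ} (hi : i < a) :
    ext (takeF a ha f) i = ext f i := by
  rw [ext_lt _ hi, ext_lt _ (by omega : i < L)]
  rfl

lemma ext_dropF {a b L : ℕ} (hab : a + b ≤ L) (f : Fin L → Bool) {j : ℕ} (hj : j < b) :
    ext (dropF a b hab f) j = ext f (a + j) := by
  rw [ext_lt _ hj, ext_lt _ (by omega : a + j < L)]
  rfl

lemma ext_glueF_lt {a b L : ℕ} (hab : a + b = L) (f1 : Fin a → Bool) (f2 : Fin b → Bool)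
    {i : ℕ} (hi : i < a) :
    ext (glueF a b L hab f1 f2) i = ext f1 i := by
  rw [ext_lt _ (by omega : i < L), ext_lt _ hi]
  simp only [glueF]
  rw [dif_pos hi]

lemma ext_glueF_ge {a b L : ℕ} (hab : a + b = L) (f1 : Fin a → Bool) (f2 : Fin b → Bool)
    {j : ℕ} (hj : j < b) :
    ext (glueF a b L hab f1 f2) (a + j) = ext f2 j := by
  rw [ext_lt _ (by omega : a + j < L), ext_lt _ hj]
  simp only [glueF]
  rw [dif_neg (by omega)]
  congr 1
  exact Fin.ext (by simp)

lemma cnt_takeF {a L : ℕ} (ha : a ≤ L) (f : Fin L → Bool) {k : ℕ} (hk : k ≤ a) :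
    cnt (ext (takeF a ha f)) k = cnt (ext f) k :=
  cnt_congr k (fun i hi => ext_takeF ha f (by omega))

lemma cnt_dropF {a b L : ℕ} (hab : a + b ≤ L) (f : Fin L → Bool) {k : ℕ} (hk : k ≤ b) :
    cnt (ext (dropF a b hab f)) k = cnt (ext f) (a + k) - cnt (ext f) a := by
  rw [cnt_add (ext f) a k]
  have : cnt (fun j => ext f (a + j)) k = cnt (ext (dropF a b hab f)) k :=
    cnt_congr k (fun j hj => (ext_dropF hab f (by omega)).symm)
  omega

lemma cnt_glueF_le {a b L : ℕ} (hab : a + b = L) (f1 : Fin a → Bool) (f2 : Fin b → Bool)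
    {k : ℕ} (hk : k ≤ a) :
    cnt (ext (glueF a b L hab f1 f2)) k = cnt (ext f1) k :=
  cnt_congr k (fun i hi => ext_glueF_lt hab f1 f2 (by omega))

lemma cnt_glueF_add {a b L : ℕ} (hab : a + b = L) (f1 : Fin a → Bool) (f2 : Fin b → Bool)
    {k : ℕ} (hk : k ≤ b) :
    cnt (ext (glueF a b L hab f1 f2)) (a + k) = cnt (ext f1) a + cnt (ext f2) k := by
  rw [cnt_add, cnt_glueF_le hab f1 f2 le_rfl]
  congr 1
  exact cnt_congr k (fun j hj => ext_glueF_ge hab f1 f2 (by omega))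

lemma glueF_take_drop {a b L : ℕ} (hab : a + b = L) (f : Fin L → Bool) :
    glueF a b L hab (takeF a (by omega) f) (dropF a b (by omega) f) = f := by
  funext i
  simp only [glueF, takeF, dropF]
  split_ifs with h
  · rfl
  · congr 1
    exact Fin.ext (by simp; omega)

lemma takeF_glueF {a b L : ℕ} (hab : a + b = L) (ha : a ≤ L)
    (f1 : Fin a → Bool) (f2 : Fin b → Bool) :
    takeF a ha (glueF a b L hab f1 f2) = f1 := by
  funext i
  simp only [glueF, takeF]
  rw [dif_pos i.isLt]

lemma dropF_glueF {a b L : ℕ} (hab : a + b = L) (hab' : a + b ≤ L)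
    (f1 : Fin a → Bool) (f2 : Fin b → Bool) :
    dropF a b hab' (glueF a b L hab f1 f2) = f2 := by
  funext j
  simp only [glueF, dropF]
  rw [dif_neg (by omega)]
  congr 1
  exact Fin.ext (by simp)

lemma upsIn_succ_head {M : ℕ} (g : Fin (M+1) → Bool) :
    upsIn g (M+1) = (if g 0 then 1 else 0) + upsIn (fun i : Fin M => g i.succ) M := by
  rw [upsIn_eq_cnt g le_rfl, upsIn_eq_cnt _ le_rfl]
  have h2 : cnt (ext g) (M+1) = cnt (ext g) 1 + cnt (fun j => ext g (1+j)) M := by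
    have := cnt_add (ext g) 1 M
    rwa [Nat.add_comm 1 M] at this
  rw [h2]
  congr 1
  · rw [cnt_succ, cnt_zero, ext_lt g (by omega : 0 < M + 1)]
    have : (⟨0, by omega⟩ : Fin (M+1)) = 0 := rfl
    rw [this]
    split_ifs <;> rfl
  · apply cnt_congr
    intro i hi
    rw [ext_lt g (by omega : 1 + i < M + 1), ext_lt _ hi]
    congr 1
    exact Fin.ext (by simp [Nat.add_comm])

/-- Sum of `β ^ (number of trues)` over all words of length `M`. -/
lemma sum_pow_ups (β : ℝ) (M : ℕ) :
    ∑ g : Fin M → Bool, β ^ (upsIn g M) = (β + 1) ^ M := by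
  induction M with
  | zero => simp [upsIn]
  | succ M ih =>
    rw [← Equiv.sum_comp (Fin.consEquiv (fun _ : Fin (M+1) => Bool)) (fun g => β ^ (upsIn g (M+1)))]
    have hval : ∀ x : Bool × (Fin M → Bool),
        β ^ upsIn ((Fin.consEquiv (fun _ : Fin (M+1) => Bool)) x) (M+1)
          = (if x.1 then β else 1) * β ^ upsIn x.2 M := by
      intro x
      rw [upsIn_succ_head]
      have h0 : (Fin.consEquiv (fun _ : Fin (M+1) => Bool)) x 0 = x.1 := by simp
      have hs : (fun i : Fin M => (Fin.consEquiv (fun _ : Fin (M+1) => Bool)) x i.succ) = x.2 := by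
        funext i; simp
      rw [h0, hs, pow_add]
      split_ifs <;> simp
    rw [Fintype.sum_congr _ _ hval, Fintype.sum_prod_type, Fintype.sum_bool]
    norm_num
    rw [← Finset.mul_sum, ih]
    ring

end MRW3

namespace MRW4
open MRW MRW2 MRW3

/-- The subtype of strict paths. -/
def SSet (p d n : ℕ) : Type :=
  {f : Fin ((p + 1) * n + d) → Bool //
    upsIn f ((p + 1) * n + d) = p * n + d ∧
    ∀ k, 0 < k → k < (p + 1) * n + d → upsIn f k < p * rightsIn f k + d}

noncomputable instance (p d n : ℕ) : Fintype (SSet p d n) := by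
  unfold SSet
  classical
  infer_instance

lemma strictCount_eq {p d n : ℕ} (hd : d ≠ 0) :
    strictCount p d n = Nat.card (SSet p d n) := by
  rw [strictCount, if_neg (by tauto)]
  rfl

/-- Basic facts about a strict path. -/
lemma SSet.cnt_total {p d n : ℕ} (x : SSet p d n) :
    cnt (ext x.1) ((p + 1) * n + d) = p * n + d := by
  rw [← upsIn_eq_cnt x.1 le_rfl]; exact x.2.1

lemma SSet.vv_total {p d n : ℕ} (x : SSet p d n) :
    vv p (ext x.1) ((p + 1) * n + d) = d := by
  rw [← eq_iff_vv (p := p)]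
  have h := SSet.cnt_total x
  rw [h]
  have : (p+1)*n + d - (p*n+d) = n := by
    have : (p+1)*n = p*n + n := by ring
    omega
  rw [this]

lemma SSet.vv_lt {p d n : ℕ} (x : SSet p d n) {k : ℕ} (h0 : 0 < k)
    (hk : k < (p + 1) * n + d) : vv p (ext x.1) k < d := by
  rw [← lt_iff_vv (p := p)]
  have h := x.2.2 k h0 hk
  rwa [upsIn_eq_cnt x.1 (le_of_lt hk), rightsIn_eq x.1 (le_of_lt hk)] at h

/-- Converse: build the membership property from `vv` bounds. -/
lemma SSet.mk_cond {p d n : ℕ} (f : Fin ((p + 1) * n + d) → Bool)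
    (h1 : cnt (ext f) ((p + 1) * n + d) = p * n + d)
    (h2 : ∀ k, 0 < k → k < (p + 1) * n + d → vv p (ext f) k < d) :
    upsIn f ((p + 1) * n + d) = p * n + d ∧
    ∀ k, 0 < k → k < (p + 1) * n + d → upsIn f k < p * rightsIn f k + d := by
  constructor
  · rw [upsIn_eq_cnt f le_rfl]; exact h1
  · intro k hk0 hk
    rw [upsIn_eq_cnt f (le_of_lt hk), rightsIn_eq f (le_of_lt hk)]
    rw [lt_iff_vv (p := p)]
    exact h2 k hk0 hk

end MRW4

namespace MRW5
open MRW MRW2 MRW3 MRW4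

def WSet (p n : ℕ) : Type :=
  {f : Fin ((p + 1) * n) → Bool //
    upsIn f ((p + 1) * n) = p * n ∧ ∀ k ≤ (p + 1) * n, upsIn f k ≤ p * rightsIn f k}

lemma weakCount_eq (p n : ℕ) : weakCount p 0 n = Nat.card (WSet p n) := by
  rw [weakCount, WSet]
  apply Nat.card_congr
  apply Equiv.subtypeEquivRight
  intro f
  constructor
  · rintro ⟨h1, h2⟩
    exact ⟨by simpa using h1, fun k hk => by simpa using h2 k (by simpa using hk)⟩
  · rintro ⟨h1, h2⟩
    exact ⟨by simpa using h1, fun k hk => by simpa using h2 k (by simpa using hk)⟩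

/-- The last step of a strict path to `(n, pn+1)` is an up-step, and before it the path
is a weak path. -/
lemma last_step {p n : ℕ} (x : SSet p 1 n) :
    cnt (ext x.1) ((p + 1) * n) = p * n ∧ ext x.1 ((p + 1) * n) = true := by
  set w := ext x.1 with hw
  have htot : cnt w ((p + 1) * n + 1) = p * n + 1 := SSet.cnt_total x
  have hsucc := cnt_succ w ((p + 1) * n)
  have hpn : (p + 1) * n = p * n + n := by ring
  rcases Nat.eq_zero_or_pos n with hn | hn
  · subst hn
    constructor
    · simpa using cnt_zero w
    · have h1 : cnt w 1 = 1 := by simpa using htot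
      have h2 := cnt_succ w 0
      rw [cnt_zero] at h2
      show w ((p + 1) * 0) = true
      have h0 : (p + 1) * 0 = 0 := by ring
      rw [h0]
      by_contra hfalse
      rw [if_neg hfalse] at h2
      norm_num at h2
      omega
  · have hlt := SSet.vv_lt x (k := (p + 1) * n)
      (Nat.mul_pos (by omega) hn) (by omega)
    rw [← lt_iff_vv (p := p)] at hlt
    have hle := cnt_le w ((p + 1) * n)
    -- cnt w L ≤ p * (L - cnt w L)
    by_cases htrue : w ((p + 1) * n) = true
    · rw [if_pos htrue] at hsucc
      exact ⟨by omega, htrue⟩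
    · exfalso
      rw [if_neg htrue] at hsucc
      have hc : cnt w ((p + 1) * n) = p * n + 1 := by omega
      rw [hc] at hlt
      have hsub : (p + 1) * n - (p * n + 1) = n - 1 := by omega
      rw [hsub] at hlt
      have hmul : p * (n - 1) + p = p * n := by
        have h1 : n - 1 + 1 = n := by omega
        calc p * (n - 1) + p = p * ((n - 1) + 1) := by ring
        _ = p * n := by rw [h1]
      omega

noncomputable def toWeak (p n : ℕ) (x : SSet p 1 n) : WSet p n := by
  refine ⟨takeF ((p + 1) * n) (by omega) x.1, ?_, ?_⟩
  · rw [upsIn_eq_cnt _ le_rfl, cnt_takeF _ _ le_rfl]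
    exact (last_step x).1
  · intro k hk
    rw [upsIn_eq_cnt _ hk, rightsIn_eq _ hk, cnt_takeF _ _ hk]
    rcases Nat.eq_zero_or_pos k with hk0 | hk0
    · subst hk0; rw [cnt_zero]; omega
    · rcases Nat.lt_or_ge k ((p + 1) * n) with hkL | hkL
      · have := SSet.vv_lt x (k := k) hk0 (by omega)
        rw [← lt_iff_vv (p := p)] at this
        omega
      · have hkeq : k = (p + 1) * n := by omega
        subst hkeq
        rw [(last_step x).1]
        have hpn : (p + 1) * n = p * n + n := by ring
        have hsub : (p + 1) * n - p * n = n := by omega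
        rw [hsub]

lemma toWeak_bijective (p n : ℕ) : Function.Bijective (toWeak p n) := by
  constructor
  · intro x y hxy
    have h := congrArg Subtype.val hxy
    simp only [toWeak] at h
    apply Subtype.ext
    funext i
    rcases Nat.lt_or_ge (i : ℕ) ((p + 1) * n) with hi | hi
    · have := congrFun h ⟨(i : ℕ), hi⟩
      simp only [takeF] at this
      convert this using 2 <;> exact (Fin.ext rfl)
    · have hieq : (i : ℕ) = (p + 1) * n := by have := i.isLt; omega
      have h1 := (last_step x).2
      have h2 := (last_step y).2
      rw [ext_lt _ (by omega : (p+1)*n < (p+1)*n+1)] at h1 h2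
      have hx : x.1 i = true := by
        rw [show i = ⟨(p+1)*n, by omega⟩ from Fin.ext hieq]; exact h1
      have hy : y.1 i = true := by
        rw [show i = ⟨(p+1)*n, by omega⟩ from Fin.ext hieq]; exact h2
      rw [hx, hy]
  · intro y
    have hone : ∀ j : ℕ, j < 1 → ext (fun _ : Fin 1 => true) j = true := by
      intro j hj
      rw [ext_lt _ hj]
    have hcnt1 : cnt (ext (fun _ : Fin 1 => true)) 1 = 1 := by
      rw [cnt_succ, cnt_zero, hone 0 (by omega)]
      simp
    have hab : (p + 1) * n + 1 = (p + 1) * n + 1 := rfl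
    set f := glueF ((p + 1) * n) 1 ((p + 1) * n + 1) hab y.1 (fun _ => true) with hf
    have hytot : cnt (ext y.1) ((p + 1) * n) = p * n := by
      rw [← upsIn_eq_cnt _ le_rfl]; exact y.2.1
    have hcond : upsIn f ((p + 1) * n + 1) = p * n + 1 ∧
        ∀ k, 0 < k → k < (p + 1) * n + 1 → upsIn f k < p * rightsIn f k + 1 := by
      apply SSet.mk_cond
      · have := cnt_glueF_add hab y.1 (fun _ => true) (k := 1) le_rfl
        rw [← hf] at this
        rw [this, hcnt1, hytot]
      · intro k hk0 hk
        rw [← lt_iff_vv (p := p)]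
        have hkL : k ≤ (p + 1) * n := by omega
        have hck : cnt (ext f) k = cnt (ext y.1) k := by
          rw [hf]; exact cnt_glueF_le hab y.1 (fun _ => true) hkL
        have hyk := y.2.2 k hkL
        rw [upsIn_eq_cnt _ hkL, rightsIn_eq _ hkL] at hyk
        rw [hck]
        omega
    refine ⟨⟨f, hcond⟩, ?_⟩
    apply Subtype.ext
    simp only [toWeak]
    exact takeF_glueF hab _ y.1 (fun _ => true)

lemma strict_one_eq_weak (p n : ℕ) : strictCount p 1 n = weakCount p 0 n := by
  rw [strictCount_eq (by omega), weakCount_eq]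
  exact Nat.card_eq_of_bijective _ (toWeak_bijective p n)

end MRW5

namespace MRW6
open MRW MRW2 MRW3 MRW4

lemma ext_ge {L : ℕ} (f : Fin L → Bool) {i : ℕ} (h : L ≤ i) : ext f i = false :=
  dif_neg (by omega)

lemma vv_eq_of_cnt {p : ℕ} {w w' : ℕ → Bool} {k : ℕ} (h : cnt w k = cnt w' k) :
    vv p w k = vv p w' k := by unfold vv; rw [h]

/-- The first time the word strictly exceeds the line `y = p x`. -/
noncomputable def fc (p : ℕ) (w : ℕ → Bool) : ℕ := sInf {k | 1 ≤ vv p w k}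

lemma fc_spec {p : ℕ} {w : ℕ → Bool} {K : ℕ} (hK : 1 ≤ vv p w K) :
    0 < fc p w ∧ fc p w ≤ K ∧ vv p w (fc p w) = 1 ∧ ∀ j < fc p w, vv p w j ≤ 0 := by
  have hne : {k | 1 ≤ vv p w k}.Nonempty := ⟨K, hK⟩
  have hmem : 1 ≤ vv p w (fc p w) := Nat.sInf_mem hne
  have hmin : ∀ j < fc p w, vv p w j ≤ 0 := by
    intro j hj
    have := Nat.notMem_of_lt_sInf hj
    simp only [Set.mem_setOf_eq] at this
    omega
  have hpos : 0 < fc p w := by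
    rcases Nat.eq_zero_or_pos (fc p w) with h | h
    · rw [h, vv_zero] at hmem; omega
    · exact h
  have hle : fc p w ≤ K := Nat.sInf_le hK
  refine ⟨hpos, hle, ?_, hmin⟩
  obtain ⟨k1, hk1⟩ : ∃ k1, fc p w = k1 + 1 := ⟨fc p w - 1, by omega⟩
  have hstep := vv_succ (p := p) w k1
  have hprev : vv p w k1 ≤ 0 := hmin k1 (by omega)
  rw [← hk1] at hstep
  rw [hk1] at hmem ⊢
  rw [hk1] at hstep
  split_ifs at hstep <;> omega

section Rec

variable {p d n : ℕ}

noncomputable def kk (x : SSet p (d+1) n) : ℕ := fc p (ext x.1)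
noncomputable def rr (x : SSet p (d+1) n) : ℕ := kk x - cnt (ext x.1) (kk x)

lemma kk_spec (hd : 0 < d) (x : SSet p (d+1) n) :
    0 < kk x ∧ kk x < (p + 1) * n + (d + 1) ∧
    cnt (ext x.1) (kk x) = p * rr x + 1 ∧
    kk x = (p + 1) * rr x + 1 ∧ rr x ≤ n ∧
    (∀ j < kk x, vv p (ext x.1) j ≤ 0) ∧ vv p (ext x.1) (kk x) = 1 := by
  set w := ext x.1 with hw
  have hvtop : vv p w ((p + 1) * n + (d + 1)) = ((d + 1 : ℕ) : ℤ) := SSet.vv_total x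
  have hK : 1 ≤ vv p w ((p + 1) * n + (d + 1)) := by
    rw [hvtop]; exact_mod_cast Nat.succ_le_succ (Nat.zero_le d)
  obtain ⟨h1, h2, h3, h4⟩ := fc_spec hK
  have hkk : kk x = fc p w := rfl
  rw [← hkk] at h1 h2 h3 h4
  have hklt : kk x < (p + 1) * n + (d + 1) := by
    rcases Nat.lt_or_ge (kk x) ((p + 1) * n + (d + 1)) with h | h
    · exact h
    · exfalso
      have : kk x = (p + 1) * n + (d + 1) := by omega
      rw [this, hvtop] at h3
      have : ((d + 1 : ℕ) : ℤ) = 1 := h3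
      have : d + 1 = 1 := by exact_mod_cast this
      omega
  have h3' : vv p w (kk x) = ((1 : ℕ) : ℤ) := by rw [Nat.cast_one]; exact h3
  have hcnt : cnt w (kk x) = p * (kk x - cnt w (kk x)) + 1 :=
    (eq_iff_vv (p := p)).mpr h3'
  have hrr : rr x = kk x - cnt w (kk x) := rfl
  have hcnt' : cnt w (kk x) = p * rr x + 1 := by rw [hrr]; exact hcnt
  have hle := cnt_le w (kk x)
  have hmul : (p + 1) * rr x = p * rr x + rr x := by ring
  have hkeq : kk x = (p + 1) * rr x + 1 := by omega
  have hrn : rr x ≤ n := by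
    have hmono := sub_cnt_mono w (le_of_lt hklt)
    simp only at hmono
    have htot : cnt w ((p + 1) * n + (d + 1)) = p * n + (d + 1) := SSet.cnt_total x
    have hpn : (p + 1) * n = p * n + n := by ring
    omega
  exact ⟨h1, hklt, hcnt', hkeq, hrn, h4, h3⟩

/-- Splitting a strict path at its first crossing of `y = px`. -/
noncomputable def phi (hd : 0 < d) (x : SSet p (d+1) n) :
    Σ m : Fin (n + 1), SSet p 1 (m : ℕ) × SSet p d (n - (m : ℕ)) := by
  have h1 := (kk_spec hd x).1
  have h2 := (kk_spec hd x).2.1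
  have h3 := (kk_spec hd x).2.2.1
  have h4 := (kk_spec hd x).2.2.2.1
  have h5 := (kk_spec hd x).2.2.2.2.1
  have h6 := (kk_spec hd x).2.2.2.2.2.1
  have h7 := (kk_spec hd x).2.2.2.2.2.2
  refine ⟨⟨rr x, by omega⟩, ⟨takeF ((p + 1) * rr x + 1) (by omega) x.1, ?_⟩,
    ⟨dropF ((p + 1) * rr x + 1) ((p + 1) * (n - rr x) + d) (by
      have hdist : (p + 1) * rr x + (p + 1) * (n - rr x) = (p + 1) * n := by
        have h : rr x + (n - rr x) = n := by omega
        calc (p + 1) * rr x + (p + 1) * (n - rr x) = (p + 1) * (rr x + (n - rr x)) := by ring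
        _ = (p + 1) * n := by rw [h]
      omega) x.1, ?_⟩⟩
  · apply SSet.mk_cond
    · rw [cnt_takeF _ _ le_rfl]
      rw [← h4]
      exact h3
    · intro k hk0 hk
      have hcongr : cnt (ext (takeF ((p + 1) * rr x + 1) (by omega) x.1)) k
          = cnt (ext x.1) k := cnt_takeF _ _ (by omega)
      rw [vv_eq_of_cnt (p := p) hcongr, Nat.cast_one]
      have := h6 k (by omega)
      omega
  · apply SSet.mk_cond
    · have hdist : (p + 1) * rr x + (p + 1) * (n - rr x) = (p + 1) * n := by
        have h : rr x + (n - rr x) = n := by omega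
        calc (p + 1) * rr x + (p + 1) * (n - rr x) = (p + 1) * (rr x + (n - rr x)) := by ring
        _ = (p + 1) * n := by rw [h]
      have hpdist : p * rr x + p * (n - rr x) = p * n := by
        have h : rr x + (n - rr x) = n := by omega
        calc p * rr x + p * (n - rr x) = p * (rr x + (n - rr x)) := by ring
        _ = p * n := by rw [h]
      have hc := cnt_dropF (a := (p + 1) * rr x + 1) (b := (p + 1) * (n - rr x) + d)
        (L := (p + 1) * n + (d + 1)) (by omega) x.1 (k := (p + 1) * (n - rr x) + d) le_rfl
      rw [hc]
      have hab : (p + 1) * rr x + 1 + ((p + 1) * (n - rr x) + d) = (p + 1) * n + (d + 1) := by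
        omega
      rw [hab]
      have htot : cnt (ext x.1) ((p + 1) * n + (d + 1)) = p * n + (d + 1) := SSet.cnt_total x
      have hcnta : cnt (ext x.1) ((p + 1) * rr x + 1) = p * rr x + 1 := by
        rw [← h4]; exact h3
      rw [htot, hcnta]
      omega
    · intro j hj0 hj
      have hdist : (p + 1) * rr x + (p + 1) * (n - rr x) = (p + 1) * n := by
        have h : rr x + (n - rr x) = n := by omega
        calc (p + 1) * rr x + (p + 1) * (n - rr x) = (p + 1) * (rr x + (n - rr x)) := by ring
        _ = (p + 1) * n := by rw [h]
      -- vv of the dropped word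
      have hshift : ∀ t, t ≤ (p + 1) * (n - rr x) + d →
          cnt (ext (dropF ((p + 1) * rr x + 1) ((p + 1) * (n - rr x) + d)
            (by omega) x.1)) t = cnt (fun s => ext x.1 ((p + 1) * rr x + 1 + s)) t := by
        intro t ht
        apply cnt_congr
        intro i hi
        rw [ext_dropF (by omega) x.1 (by omega)]
      have hveq : vv p (ext (dropF ((p + 1) * rr x + 1) ((p + 1) * (n - rr x) + d)
          (by omega) x.1)) j = vv p (fun s => ext x.1 ((p + 1) * rr x + 1 + s)) j :=
        vv_eq_of_cnt (hshift j (by omega))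
      rw [hveq]
      have hsh := vv_shift (p := p) (ext x.1) ((p + 1) * rr x + 1) j
      have hva : vv p (ext x.1) ((p + 1) * rr x + 1) = 1 := by rw [← h4]; exact h7
      have hvj : vv p (ext x.1) ((p + 1) * rr x + 1 + j) < ((d + 1 : ℕ) : ℤ) := by
        apply SSet.vv_lt x
        · omega
        · omega
      push_cast at hvj ⊢
      omega

end Rec

end MRW6

namespace MRW6
open MRW MRW2 MRW3 MRW4

section Rec2

variable {p d n : ℕ}

/-- Flattening of the split data into an infinite word. -/
def FF (z : Σ m : Fin (n + 1), SSet p 1 (m : ℕ) × SSet p d (n - (m : ℕ))) : ℕ → Bool :=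
  fun i => if i < (p + 1) * (z.1 : ℕ) + 1 then ext z.2.1.1 i
    else ext z.2.2.1 (i - ((p + 1) * (z.1 : ℕ) + 1))

lemma FF_phi (hd : 0 < d) (x : SSet p (d+1) n) : FF (phi hd x) = ext x.1 := by
  obtain ⟨h1, h2, h3, h4, h5, h6, h7⟩ := kk_spec hd x
  have hdist : (p + 1) * rr x + (p + 1) * (n - rr x) = (p + 1) * n := by
    have h : rr x + (n - rr x) = n := by omega
    calc (p + 1) * rr x + (p + 1) * (n - rr x) = (p + 1) * (rr x + (n - rr x)) := by ring
    _ = (p + 1) * n := by rw [h]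
  funext i
  simp only [FF, phi]
  split_ifs with hi
  · simp only [hi, ↓reduceIte]
    exact ext_takeF _ x.1 hi
  · simp only [hi, ↓reduceIte]
    set a := (p + 1) * rr x + 1 with ha
    set b := (p + 1) * (n - rr x) + d with hb
    rcases Nat.lt_or_ge (i - a) b with hj | hj
    · rw [ext_dropF _ x.1 hj]
      congr 1
      omega
    · rw [ext_ge _ hj, ext_ge]
      omega

lemma phi_injective (hd : 0 < d) :
    Function.Injective (phi (p := p) (n := n) hd) := by
  intro x y h
  have hF : ext x.1 = ext y.1 := by
    rw [← FF_phi hd x, ← FF_phi hd y, h]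
  apply Subtype.ext
  funext i
  have := congrFun hF (i : ℕ)
  rwa [ext_lt x.1 i.isLt, ext_lt y.1 i.isLt] at this

/-- Gluing a crossing path and a strict path. -/
noncomputable def psi (hd : 0 < d)
    (z : Σ m : Fin (n + 1), SSet p 1 (m : ℕ) × SSet p d (n - (m : ℕ))) :
    SSet p (d+1) n := by
  obtain ⟨m, y1, y2⟩ := z
  have hm : (m : ℕ) ≤ n := by have := m.isLt; omega
  have hdist : (p + 1) * (m : ℕ) + (p + 1) * (n - (m : ℕ)) = (p + 1) * n := by
    have h : (m : ℕ) + (n - (m : ℕ)) = n := by omega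
    calc (p + 1) * (m : ℕ) + (p + 1) * (n - (m : ℕ))
        = (p + 1) * ((m : ℕ) + (n - (m : ℕ))) := by ring
    _ = (p + 1) * n := by rw [h]
  have hab : (p + 1) * (m : ℕ) + 1 + ((p + 1) * (n - (m : ℕ)) + d)
      = (p + 1) * n + (d + 1) := by omega
  refine ⟨glueF _ _ _ hab y1.1 y2.1, ?_⟩
  have hy1tot : cnt (ext y1.1) ((p + 1) * (m : ℕ) + 1) = p * (m : ℕ) + 1 := SSet.cnt_total y1
  have hy2tot : cnt (ext y2.1) ((p + 1) * (n - (m : ℕ)) + d) = p * (n - (m : ℕ)) + d :=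
    SSet.cnt_total y2
  have hpdist : p * (m : ℕ) + p * (n - (m : ℕ)) = p * n := by
    have h : (m : ℕ) + (n - (m : ℕ)) = n := by omega
    calc p * (m : ℕ) + p * (n - (m : ℕ)) = p * ((m : ℕ) + (n - (m : ℕ))) := by ring
    _ = p * n := by rw [h]
  apply SSet.mk_cond
  · have hc := cnt_glueF_add hab y1.1 y2.1 (k := (p + 1) * (n - (m : ℕ)) + d) le_rfl
    rw [hab] at hc
    rw [hc, hy1tot, hy2tot]
    omega
  · intro k hk0 hk
    rcases Nat.lt_or_ge k ((p + 1) * (m : ℕ) + 1) with hka | hka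
    · have hc : cnt (ext (glueF _ _ _ hab y1.1 y2.1)) k = cnt (ext y1.1) k :=
        cnt_glueF_le hab y1.1 y2.1 (by omega)
      rw [vv_eq_of_cnt (p := p) hc]
      have := SSet.vv_lt y1 hk0 hka
      push_cast at this ⊢
      omega
    · have hkeq : k = (p + 1) * (m : ℕ) + 1 + (k - ((p + 1) * (m : ℕ) + 1)) := by omega
      set j := k - ((p + 1) * (m : ℕ) + 1) with hj
      have hjb : j < (p + 1) * (n - (m : ℕ)) + d := by omega
      rw [hkeq]
      rw [vv_shift (p := p)]
      have hva : vv p (ext (glueF _ _ _ hab y1.1 y2.1)) ((p + 1) * (m : ℕ) + 1) = 1 := by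
        have hc : cnt (ext (glueF _ _ _ hab y1.1 y2.1)) ((p + 1) * (m : ℕ) + 1)
            = cnt (ext y1.1) ((p + 1) * (m : ℕ) + 1) := cnt_glueF_le hab y1.1 y2.1 le_rfl
        rw [vv_eq_of_cnt (p := p) hc]
        have := SSet.vv_total y1
        rw [this]
        norm_num
      rw [hva]
      have hshift : cnt (fun s => ext (glueF _ _ _ hab y1.1 y2.1)
          ((p + 1) * (m : ℕ) + 1 + s)) j = cnt (ext y2.1) j := by
        apply cnt_congr
        intro i hi
        exact ext_glueF_ge hab y1.1 y2.1 (by omega)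
      rw [vv_eq_of_cnt (p := p) hshift]
      rcases Nat.eq_zero_or_pos j with hj0 | hj0
      · rw [hj0, vv_zero]
        push_cast
        omega
      · have := SSet.vv_lt y2 hj0 hjb
        push_cast at this ⊢
        omega

/-- The first crossing of the glued path is at the gluing point. -/
lemma kk_psi (hd : 0 < d)
    (z : Σ m : Fin (n + 1), SSet p 1 (m : ℕ) × SSet p d (n - (m : ℕ))) :
    kk (psi hd z) = (p + 1) * (z.1 : ℕ) + 1 := by
  obtain ⟨m, y1, y2⟩ := z
  have hw : ∀ i < (p + 1) * (m : ℕ) + 1, ext (psi hd ⟨m, y1, y2⟩).1 i = ext y1.1 i := by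
    intro i hi
    simp only [psi]
    exact ext_glueF_lt _ y1.1 y2.1 hi
  have hcnt : ∀ k ≤ (p + 1) * (m : ℕ) + 1,
      cnt (ext (psi hd ⟨m, y1, y2⟩).1) k = cnt (ext y1.1) k := by
    intro k hk
    exact cnt_congr k (fun i hi => hw i (by omega))
  have hva : vv p (ext (psi hd ⟨m, y1, y2⟩).1) ((p + 1) * (m : ℕ) + 1) = 1 := by
    rw [vv_eq_of_cnt (p := p) (hcnt _ le_rfl)]
    have := SSet.vv_total y1
    rw [this]; norm_num
  have hbelow : ∀ j < (p + 1) * (m : ℕ) + 1, vv p (ext (psi hd ⟨m, y1, y2⟩).1) j ≤ 0 := by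
    intro j hj
    rw [vv_eq_of_cnt (p := p) (hcnt _ (by omega))]
    rcases Nat.eq_zero_or_pos j with hj0 | hj0
    · rw [hj0, vv_zero]
    · have := SSet.vv_lt y1 hj0 hj
      push_cast at this
      omega
  have hmem : (p + 1) * (m : ℕ) + 1 ∈ {k | 1 ≤ vv p (ext (psi hd ⟨m, y1, y2⟩).1) k} := by
    simp only [Set.mem_setOf_eq, hva]
    omega
  apply le_antisymm
  · exact Nat.sInf_le hmem
  · by_contra hlt
    push_neg at hlt
    have hne : {k | 1 ≤ vv p (ext (psi hd ⟨m, y1, y2⟩).1) k}.Nonempty := ⟨_, hmem⟩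
    have hkmem := Nat.sInf_mem hne
    simp only [Set.mem_setOf_eq] at hkmem
    have := hbelow (kk (psi hd ⟨m, y1, y2⟩)) hlt
    have hkk : kk (psi hd ⟨m, y1, y2⟩) = sInf {k | 1 ≤ vv p (ext (psi hd ⟨m, y1, y2⟩).1) k} := rfl
    rw [hkk] at this
    omega

lemma psi_injective (hd : 0 < d) :
    Function.Injective (psi (p := p) (n := n) hd) := by
  rintro ⟨m, y1, y2⟩ ⟨m', y1', y2'⟩ h
  have hk1 := kk_psi hd ⟨m, y1, y2⟩
  have hk2 := kk_psi hd ⟨m', y1', y2'⟩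
  dsimp only at hk1 hk2
  rw [h] at hk1
  have hmm : (p + 1) * (m : ℕ) + 1 = (p + 1) * (m' : ℕ) + 1 := by rw [← hk1, hk2]
  have hm : (m : ℕ) = (m' : ℕ) := by
    have := Nat.eq_of_mul_eq_mul_left (by omega : 0 < p + 1) (by omega :
      (p + 1) * (m : ℕ) = (p + 1) * (m' : ℕ))
    exact this
  have hmeq : m = m' := Fin.ext hm
  subst hmeq
  have hglue : (psi hd ⟨m, y1, y2⟩).1 = (psi hd ⟨m, y1', y2'⟩).1 := congrArg Subtype.val h
  simp only [psi] at hglue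
  have hy1 : y1 = y1' := by
    apply Subtype.ext
    have h1 := takeF_glueF (a := (p + 1) * (m : ℕ) + 1) (L := (p + 1) * n + (d + 1))
      (b := (p + 1) * (n - (m : ℕ)) + d) (by
        have := m.isLt
        have h : (m : ℕ) + (n - (m : ℕ)) = n := by omega
        calc (p + 1) * (m : ℕ) + 1 + ((p + 1) * (n - (m : ℕ)) + d)
            = (p + 1) * ((m : ℕ) + (n - (m : ℕ))) + (d + 1) := by ring
        _ = (p + 1) * n + (d + 1) := by rw [h]) (by
        have := m.isLt
        have hmul := Nat.mul_le_mul_left (p + 1) (by omega : (m:ℕ) ≤ n)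
        omega) y1.1 y2.1
    have h2 := takeF_glueF (a := (p + 1) * (m : ℕ) + 1) (L := (p + 1) * n + (d + 1))
      (b := (p + 1) * (n - (m : ℕ)) + d) (by
        have := m.isLt
        have h : (m : ℕ) + (n - (m : ℕ)) = n := by omega
        calc (p + 1) * (m : ℕ) + 1 + ((p + 1) * (n - (m : ℕ)) + d)
            = (p + 1) * ((m : ℕ) + (n - (m : ℕ))) + (d + 1) := by ring
        _ = (p + 1) * n + (d + 1) := by rw [h]) (by
        have := m.isLt
        have hmul := Nat.mul_le_mul_left (p + 1) (by omega : (m:ℕ) ≤ n)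
        omega) y1'.1 y2'.1
    rw [← h1, ← h2, hglue]
  have hy2 : y2 = y2' := by
    apply Subtype.ext
    have h1 := dropF_glueF (a := (p + 1) * (m : ℕ) + 1) (L := (p + 1) * n + (d + 1))
      (b := (p + 1) * (n - (m : ℕ)) + d) (by
        have := m.isLt
        have h : (m : ℕ) + (n - (m : ℕ)) = n := by omega
        calc (p + 1) * (m : ℕ) + 1 + ((p + 1) * (n - (m : ℕ)) + d)
            = (p + 1) * ((m : ℕ) + (n - (m : ℕ))) + (d + 1) := by ring
        _ = (p + 1) * n + (d + 1) := by rw [h]) (by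
        have := m.isLt
        have h : (m : ℕ) + (n - (m : ℕ)) = n := by omega
        have : (p + 1) * (m : ℕ) + 1 + ((p + 1) * (n - (m : ℕ)) + d)
            = (p + 1) * n + (d + 1) := by
          calc (p + 1) * (m : ℕ) + 1 + ((p + 1) * (n - (m : ℕ)) + d)
              = (p + 1) * ((m : ℕ) + (n - (m : ℕ))) + (d + 1) := by ring
          _ = (p + 1) * n + (d + 1) := by rw [h]
        omega) y1.1 y2.1
    have h2 := dropF_glueF (a := (p + 1) * (m : ℕ) + 1) (L := (p + 1) * n + (d + 1))
      (b := (p + 1) * (n - (m : ℕ)) + d) (by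
        have := m.isLt
        have h : (m : ℕ) + (n - (m : ℕ)) = n := by omega
        calc (p + 1) * (m : ℕ) + 1 + ((p + 1) * (n - (m : ℕ)) + d)
            = (p + 1) * ((m : ℕ) + (n - (m : ℕ))) + (d + 1) := by ring
        _ = (p + 1) * n + (d + 1) := by rw [h]) (by
        have := m.isLt
        have h : (m : ℕ) + (n - (m : ℕ)) = n := by omega
        have : (p + 1) * (m : ℕ) + 1 + ((p + 1) * (n - (m : ℕ)) + d)
            = (p + 1) * n + (d + 1) := by
          calc (p + 1) * (m : ℕ) + 1 + ((p + 1) * (n - (m : ℕ)) + d)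
              = (p + 1) * ((m : ℕ) + (n - (m : ℕ))) + (d + 1) := by ring
          _ = (p + 1) * n + (d + 1) := by rw [h]
        omega) y1'.1 y2'.1
    rw [← h1, ← h2, hglue]
  rw [hy1, hy2]

lemma card_eq (hd : 0 < d) :
    Nat.card (SSet p (d+1) n)
      = Nat.card (Σ m : Fin (n + 1), SSet p 1 (m : ℕ) × SSet p d (n - (m : ℕ))) := by
  have h1 := Fintype.card_le_of_injective _ (phi_injective (p := p) (n := n) hd)
  have h2 := Fintype.card_le_of_injective _ (psi_injective (p := p) (n := n) hd)
  rw [Nat.card_eq_fintype_card, Nat.card_eq_fintype_card]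
  omega

end Rec2

lemma strict_rec (p d n : ℕ) (hd : 0 < d) :
    strictCount p (d+1) n
      = ∑ m ∈ Finset.range (n+1), strictCount p 1 m * strictCount p d (n - m) := by
  rw [strictCount_eq (by omega : (d+1) ≠ 0), card_eq hd]
  rw [Nat.card_eq_fintype_card, Fintype.card_sigma]
  rw [Fin.sum_univ_eq_sum_range
    (fun m => Fintype.card (SSet p 1 m × SSet p d (n - m)))]
  apply Finset.sum_congr rfl
  intro m hm
  rw [Fintype.card_prod, strictCount_eq (by omega : (1:ℕ) ≠ 0),
    strictCount_eq (by omega : d ≠ 0), Nat.card_eq_fintype_card, Nat.card_eq_fintype_card]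

end MRW6

namespace MRW7
open MRW MRW2 MRW3 MRW4

section Bound

variable {p d N : ℕ}

noncomputable def Phi2 (p d N : ℕ)
    (z : Σ n : Fin N, SSet p d (n : ℕ) ×
      (Fin (((p+1)*N + d) - ((p+1)*(n : ℕ) + d)) → Bool)) : Fin ((p+1)*N + d) → Bool :=
  glueF ((p+1)*(z.1 : ℕ) + d) (((p+1)*N + d) - ((p+1)*(z.1 : ℕ) + d)) ((p+1)*N + d)
    (by
      have := z.1.isLt
      have hmul := Nat.mul_le_mul_left (p+1) (by omega : (z.1 : ℕ) ≤ N)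
      omega)
    z.2.1.1 z.2.2

lemma Phi2_le (hd : 0 < d)
    {z z' : Σ n : Fin N, SSet p d (n : ℕ) ×
      (Fin (((p+1)*N + d) - ((p+1)*(n : ℕ) + d)) → Bool)}
    (h : Phi2 p d N z = Phi2 p d N z') : (z.1 : ℕ) ≤ (z'.1 : ℕ) := by
  obtain ⟨n, y, s⟩ := z
  obtain ⟨n', y', s'⟩ := z'
  dsimp only at h ⊢
  by_contra hlt
  push_neg at hlt
  have hmul1 : (p+1) * ((n' : ℕ) + 1) ≤ (p+1) * (n : ℕ) := Nat.mul_le_mul_left _ (by omega)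
  have hmul2 : (p+1) * ((n' : ℕ) + 1) = (p+1) * (n' : ℕ) + (p+1) := by ring
  have hmulN : (p+1) * (n : ℕ) ≤ (p+1) * N :=
    Nat.mul_le_mul_left _ (by have := n.isLt; omega)
  have hc1 : cnt (ext (Phi2 p d N ⟨n', y', s'⟩)) ((p+1)*(n' : ℕ) + d) = p * (n' : ℕ) + d := by
    rw [show Phi2 p d N ⟨n', y', s'⟩ = glueF ((p+1)*(n' : ℕ) + d)
      (((p+1)*N + d) - ((p+1)*(n' : ℕ) + d)) ((p+1)*N + d)
      (by
        have := n'.isLt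
        have hm := Nat.mul_le_mul_left (p+1) (by omega : (n' : ℕ) ≤ N)
        omega) y'.1 s' from rfl]
    rw [cnt_glueF_le _ _ _ le_rfl]
    exact SSet.cnt_total y'
  have hc2 : cnt (ext (Phi2 p d N ⟨n, y, s⟩)) ((p+1)*(n' : ℕ) + d)
      = cnt (ext y.1) ((p+1)*(n' : ℕ) + d) := by
    rw [show Phi2 p d N ⟨n, y, s⟩ = glueF ((p+1)*(n : ℕ) + d)
      (((p+1)*N + d) - ((p+1)*(n : ℕ) + d)) ((p+1)*N + d)
      (by omega) y.1 s from rfl]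
    rw [cnt_glueF_le _ _ _ (by omega)]
  have hstrict := SSet.vv_lt y (k := (p+1)*(n' : ℕ) + d) (by omega) (by omega)
  rw [← lt_iff_vv (p := p)] at hstrict
  rw [h, hc1] at hc2
  rw [← hc2] at hstrict
  have hdist : (p+1) * (n' : ℕ) = p * (n' : ℕ) + (n' : ℕ) := by ring
  have hsub : (p+1)*(n' : ℕ) + d - (p * (n' : ℕ) + d) = (n' : ℕ) := by omega
  rw [hsub] at hstrict
  omega

lemma Phi2_inj (hd : 0 < d) :
    Function.Injective (Phi2 p d N) := by
  rintro ⟨n, y, s⟩ ⟨n', y', s'⟩ h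
  have h1 := Phi2_le hd h
  have h2 := Phi2_le hd h.symm
  dsimp only at h1 h2
  have hnn : n = n' := Fin.ext (by omega)
  subst hnn
  simp only [Phi2] at h
  have hy : y = y' := by
    apply Subtype.ext
    have e1 := takeF_glueF (a := (p+1)*(n : ℕ) + d)
      (b := ((p+1)*N + d) - ((p+1)*(n : ℕ) + d)) (L := (p+1)*N + d)
      (by
        have := n.isLt
        have hmul := Nat.mul_le_mul_left (p+1) (by omega : (n : ℕ) ≤ N)
        omega) (by
        have := n.isLt
        have hmul := Nat.mul_le_mul_left (p+1) (by omega : (n : ℕ) ≤ N)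
        omega) y.1 s
    have e2 := takeF_glueF (a := (p+1)*(n : ℕ) + d)
      (b := ((p+1)*N + d) - ((p+1)*(n : ℕ) + d)) (L := (p+1)*N + d)
      (by
        have := n.isLt
        have hmul := Nat.mul_le_mul_left (p+1) (by omega : (n : ℕ) ≤ N)
        omega) (by
        have := n.isLt
        have hmul := Nat.mul_le_mul_left (p+1) (by omega : (n : ℕ) ≤ N)
        omega) y'.1 s'
    rw [← e1, ← e2, h]
  have hs : s = s' := by
    have e1 := dropF_glueF (a := (p+1)*(n : ℕ) + d)
      (b := ((p+1)*N + d) - ((p+1)*(n : ℕ) + d)) (L := (p+1)*N + d)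
      (by
        have := n.isLt
        have hmul := Nat.mul_le_mul_left (p+1) (by omega : (n : ℕ) ≤ N)
        omega) (by
        have := n.isLt
        have hmul := Nat.mul_le_mul_left (p+1) (by omega : (n : ℕ) ≤ N)
        omega) y.1 s
    have e2 := dropF_glueF (a := (p+1)*(n : ℕ) + d)
      (b := ((p+1)*N + d) - ((p+1)*(n : ℕ) + d)) (L := (p+1)*N + d)
      (by
        have := n.isLt
        have hmul := Nat.mul_le_mul_left (p+1) (by omega : (n : ℕ) ≤ N)
        omega) (by
        have := n.isLt
        have hmul := Nat.mul_le_mul_left (p+1) (by omega : (n : ℕ) ≤ N)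
        omega) y'.1 s'
    rw [← e1, ← e2, h]
  rw [hy, hs]

lemma upsIn_Phi2
    (z : Σ n : Fin N, SSet p d (n : ℕ) ×
      (Fin (((p+1)*N + d) - ((p+1)*(n : ℕ) + d)) → Bool)) :
    upsIn (Phi2 p d N z) ((p+1)*N + d)
      = (p * (z.1 : ℕ) + d) + upsIn z.2.2 (((p+1)*N + d) - ((p+1)*(z.1 : ℕ) + d)) := by
  obtain ⟨n, y, s⟩ := z
  dsimp only
  have hmulN : (p+1) * (n : ℕ) ≤ (p+1) * N :=
    Nat.mul_le_mul_left _ (by have := n.isLt; omega)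
  have hab' : ((p+1)*(n : ℕ) + d) + (((p+1)*N + d) - ((p+1)*(n : ℕ) + d)) = (p+1)*N + d := by
    omega
  have hPhi : Phi2 p d N ⟨n, y, s⟩ = glueF ((p+1)*(n : ℕ) + d)
      (((p+1)*N + d) - ((p+1)*(n : ℕ) + d)) ((p+1)*N + d) hab' y.1 s := rfl
  rw [upsIn_eq_cnt _ le_rfl, upsIn_eq_cnt _ le_rfl, hPhi]
  have hc := cnt_glueF_add hab' y.1 s (k := ((p+1)*N + d) - ((p+1)*(n : ℕ) + d)) le_rfl
  rw [hab'] at hc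
  rw [hc, SSet.cnt_total y]

end Bound

lemma partial_sum_le {β : ℝ} (hβ : 0 < β) (p d : ℕ) (hd : 0 < d) (N : ℕ) :
    ∑ n ∈ Finset.range N,
      (strictCount p d n : ℝ) * β ^ (p * n + d) / (β + 1) ^ ((p + 1) * n + d) ≤ 1 := by
  have hβ1 : (0:ℝ) < β + 1 := by linarith
  set W : (Fin ((p+1)*N + d) → Bool) → ℝ := fun g => β ^ (upsIn g ((p+1)*N + d)) with hW
  have hWnonneg : ∀ g, 0 ≤ W g := fun g => pow_nonneg (le_of_lt hβ) _
  -- the image bound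
  have hinj := Phi2_inj (p := p) (d := d) (N := N) hd
  have himg : ∑ z : (Σ n : Fin N, SSet p d (n : ℕ) ×
        (Fin (((p+1)*N + d) - ((p+1)*(n : ℕ) + d)) → Bool)), W (Phi2 p d N z)
      ≤ ∑ g : Fin ((p+1)*N + d) → Bool, W g := by
    rw [← Finset.sum_image (fun x _ y _ h => hinj h)]
    apply Finset.sum_le_sum_of_subset_of_nonneg (Finset.subset_univ _)
    intro g _ _
    exact hWnonneg g
  have hall : ∑ g : Fin ((p+1)*N + d) → Bool, W g = (β + 1) ^ ((p+1)*N + d) :=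
    MRW3.sum_pow_ups β ((p+1)*N + d)
  -- compute the sigma sum
  have hsig : ∑ z : (Σ n : Fin N, SSet p d (n : ℕ) ×
        (Fin (((p+1)*N + d) - ((p+1)*(n : ℕ) + d)) → Bool)), W (Phi2 p d N z)
      = ∑ n ∈ Finset.range N, (strictCount p d n : ℝ) * β ^ (p * n + d)
          * (β + 1) ^ (((p+1)*N + d) - ((p+1)*n + d)) := by
    rw [← Finset.univ_sigma_univ, Finset.sum_sigma]
    rw [← Fin.sum_univ_eq_sum_range (fun n => (strictCount p d n : ℝ) * β ^ (p * n + d)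
      * (β + 1) ^ (((p+1)*N + d) - ((p+1)*n + d))) N]
    apply Finset.sum_congr rfl
    intro n _
    rw [Fintype.sum_prod_type]
    have hterm : ∀ (y : SSet p d (n : ℕ))
        (s : Fin (((p+1)*N + d) - ((p+1)*(n : ℕ) + d)) → Bool),
        W (Phi2 p d N ⟨n, y, s⟩)
          = β ^ (p * (n : ℕ) + d) * β ^ (upsIn s (((p+1)*N + d) - ((p+1)*(n : ℕ) + d))) := by
      intro y s
      simp only [hW]
      have := upsIn_Phi2 (p := p) (d := d) (N := N) ⟨n, y, s⟩
      dsimp only at this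
      rw [this, pow_add]
    have : ∀ y : SSet p d (n : ℕ),
        ∑ s : Fin (((p+1)*N + d) - ((p+1)*(n : ℕ) + d)) → Bool, W (Phi2 p d N ⟨n, y, s⟩)
          = β ^ (p * (n : ℕ) + d) * (β + 1) ^ (((p+1)*N + d) - ((p+1)*(n : ℕ) + d)) := by
      intro y
      rw [Finset.sum_congr rfl (fun s _ => hterm y s), ← Finset.mul_sum,
        MRW3.sum_pow_ups β (((p+1)*N + d) - ((p+1)*(n : ℕ) + d))]
    rw [Finset.sum_congr rfl (fun y _ => this y), Finset.sum_const]
    rw [strictCount_eq (by omega : d ≠ 0), Nat.card_eq_fintype_card]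
    simp only [Finset.card_univ, nsmul_eq_mul]
    ring
  -- put together
  have hbound : ∑ n ∈ Finset.range N, (strictCount p d n : ℝ) * β ^ (p * n + d)
      * (β + 1) ^ (((p+1)*N + d) - ((p+1)*n + d)) ≤ (β + 1) ^ ((p+1)*N + d) := by
    rw [← hsig, ← hall]
    exact himg
  have hfinal : ∑ n ∈ Finset.range N,
      (strictCount p d n : ℝ) * β ^ (p * n + d) / (β + 1) ^ ((p + 1) * n + d)
      = (∑ n ∈ Finset.range N, (strictCount p d n : ℝ) * β ^ (p * n + d)
        * (β + 1) ^ (((p+1)*N + d) - ((p+1)*n + d))) / (β + 1) ^ ((p+1)*N + d) := by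
    rw [Finset.sum_div]
    apply Finset.sum_congr rfl
    intro n hn
    have hnN : n < N := Finset.mem_range.mp hn
    have hmulN : (p+1) * n ≤ (p+1) * N := Nat.mul_le_mul_left _ (by omega)
    have hpow : (β + 1) ^ ((p + 1) * n + d) * (β + 1) ^ (((p+1)*N + d) - ((p+1)*n + d))
        = (β + 1) ^ ((p+1)*N + d) := by
      rw [← pow_add]
      congr 1
      omega
    rw [← hpow]
    rw [mul_div_mul_right _ _ (by positivity : (β + 1) ^ (((p+1)*N + d) - ((p+1)*n + d)) ≠ 0)]
  rw [hfinal]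
  rw [div_le_one (by positivity)]
  exact hbound

lemma summable_strict {β : ℝ} (hβ : 0 < β) (p d : ℕ) (hd : 0 < d) :
    Summable (fun n => (strictCount p d n : ℝ) * β ^ (p * n + d) / (β + 1) ^ ((p + 1) * n + d)) := by
  apply summable_of_sum_range_le (c := 1)
  · intro n
    have hβ1 : (0:ℝ) < β + 1 := by linarith
    positivity
  · intro N
    exact partial_sum_le hβ p d hd N

end MRW7

namespace MRW8

lemma cauchy {β : ℝ} (hβ : 0 < β) (p d : ℕ) (hd : 0 < d) :
    (∑' n : ℕ, (strictCount p 1 n : ℝ) * β ^ (p * n + 1) / (β + 1) ^ ((p + 1) * n + 1))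
      * (∑' n : ℕ, (strictCount p d n : ℝ) * β ^ (p * n + d) / (β + 1) ^ ((p + 1) * n + d))
    = ∑' n : ℕ, (strictCount p (d+1) n : ℝ) * β ^ (p * n + (d+1))
        / (β + 1) ^ ((p + 1) * n + (d+1)) := by
  have hβ1 : (0:ℝ) < β + 1 := by linarith
  have h1 := MRW7.summable_strict hβ p 1 (by omega)
  have hd' := MRW7.summable_strict hβ p d hd
  have hprod := Summable.mul_of_nonneg h1 hd'
    (fun n => by positivity) (fun n => by positivity)
  rw [Summable.tsum_mul_tsum_eq_tsum_sum_range h1 hd' hprod]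
  apply tsum_congr
  intro n
  have hterm : ∀ k ∈ Finset.range (n+1),
      (strictCount p 1 k : ℝ) * β ^ (p * k + 1) / (β + 1) ^ ((p + 1) * k + 1)
        * ((strictCount p d (n - k) : ℝ) * β ^ (p * (n - k) + d)
          / (β + 1) ^ ((p + 1) * (n - k) + d))
      = (strictCount p 1 k : ℝ) * (strictCount p d (n - k) : ℝ)
        * (β ^ (p * n + (d+1)) / (β + 1) ^ ((p + 1) * n + (d+1))) := by
    intro k hk
    have hkn : k ≤ n := by have := Finset.mem_range.mp hk; omega
    have hdistp : p * k + p * (n - k) = p * n := by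
      have h : k + (n - k) = n := by omega
      calc p * k + p * (n - k) = p * (k + (n - k)) := by ring
      _ = p * n := by rw [h]
    have hdistp1 : (p + 1) * k + (p + 1) * (n - k) = (p + 1) * n := by
      have h : k + (n - k) = n := by omega
      calc (p + 1) * k + (p + 1) * (n - k) = (p + 1) * (k + (n - k)) := by ring
      _ = (p + 1) * n := by rw [h]
    rw [div_mul_div_comm]
    rw [show p * n + (d+1) = (p * k + 1) + (p * (n - k) + d) from by omega]
    rw [show (p + 1) * n + (d+1) = ((p + 1) * k + 1) + ((p + 1) * (n - k) + d) from by omega]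
    rw [pow_add, pow_add]
    field_simp
    ring
  rw [Finset.sum_congr rfl hterm]
  rw [← Finset.sum_mul]
  have hcast : ∑ k ∈ Finset.range (n+1),
      (strictCount p 1 k : ℝ) * (strictCount p d (n - k) : ℝ)
      = (strictCount p (d+1) n : ℝ) := by
    rw [MRW6.strict_rec p d n hd, Nat.cast_sum]
    apply Finset.sum_congr rfl
    intro k _
    rw [Nat.cast_mul]
  rw [hcast, mul_div_assoc]

end MRW8

theorem meetProb_pos_eq (β : ℝ) (hβ : 0 < β) (p : ℕ) (hp : 0 < p) (d : ℕ) (hd : 0 < d) :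
    meetProb β p d = (crossProb β p 0) ^ d := by
  have hcross : crossProb β p 0
      = ∑' n : ℕ, (strictCount p 1 n : ℝ) * β ^ (p * n + 1) / (β + 1) ^ ((p + 1) * n + 1) := by
    rw [crossProb]
    apply tsum_congr
    intro n
    rw [← MRW5.strict_one_eq_weak p n]
  have key : ∀ e : ℕ, 0 < e →
      (∑' n : ℕ, (strictCount p e n : ℝ) * β ^ (p * n + e) / (β + 1) ^ ((p + 1) * n + e))
        = (∑' n : ℕ, (strictCount p 1 n : ℝ) * β ^ (p * n + 1)
            / (β + 1) ^ ((p + 1) * n + 1)) ^ e := by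
    intro e
    induction e with
    | zero => omega
    | succ e ih =>
      intro _
      rcases Nat.eq_zero_or_pos e with h0 | h0
      · subst h0
        rw [pow_one]
      · rw [← MRW8.cauchy hβ p e h0, ih h0, pow_succ]
        ring
  rw [meetProb, if_neg (by omega), key d hd, hcross]
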